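/- arXiv:1910.08158 — 6 statements merged into one kernel-verified Lean document; each statement's English description precedes it below -/
import Mathlib

section
/- If f : (0,a] → ℝ is continuous and satisfies, for every x ∈ (0,a], the integral equation f(x) = ( W(x)/W(a) )^{1/(1−ℓ)} + (1/(1−ℓ)) ∫_x^a ( f(s)/Z(s) ) · ( W(x)/W(s) )^{1/(1−ℓ)} · ( W'(s)·Z(s)/W(s) − q·W(s) ) ds, then f is differentiable on (0,a) and satisfies f'(x) = (1/(1−ℓ)) · ( q·W(x)/Z(x) ) · f(x) for all x ∈ (0,a). -/
open MeasureTheory Set Filter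

open Topology

/-- `Z(x) = 1 + q ∫₀ˣ W(z) dz`. -/
noncomputable def Zfun (q : ℝ) (W : ℝ → ℝ) (x : ℝ) : ℝ :=
  1 + q * ∫ z in (0:ℝ)..x, W z

theorem stmt5 (q ℓ a : ℝ) (hq : 0 < q) (hℓ : ℓ ∈ Set.Ioo (0:ℝ) 1) (ha : 0 < a)
    (W W' : ℝ → ℝ) (hWpos : ∀ x > (0:ℝ), 0 < W x)
    (hW' : ∀ x > (0:ℝ), HasDerivAt W (W' x) x)
    (hW'c : ContinuousOn W' (Set.Ioi 0))
    (hmono : StrictMonoOn W (Set.Ioi 0))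
    (f : ℝ → ℝ) (hfc : ContinuousOn f (Set.Ioc 0 a))
    (heq : ∀ x ∈ Set.Ioc (0:ℝ) a,
      f x = (W x / W a) ^ ((1:ℝ) / (1 - ℓ))
        + (1 / (1 - ℓ)) *
            ∫ s in x..a,
              (f s / Zfun q W s) * (W x / W s) ^ ((1:ℝ) / (1 - ℓ)) *
                (W' s * Zfun q W s / W s - q * W s)) :
    ∀ x ∈ Set.Ioo (0:ℝ) a,
      HasDerivAt f ((1 / (1 - ℓ)) * (q * W x / Zfun q W x) * f x) x := by
  obtain ⟨hℓ0, hℓ1⟩ := hℓ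
  have h1ℓ : (0:ℝ) < 1 - ℓ := by linarith
  have hc0 : (0:ℝ) < 1 / (1 - ℓ) := by positivity
  set c : ℝ := 1 / (1 - ℓ) with hcdef
  intro x hx
  obtain ⟨hx0, hxa⟩ := hx
  have hWa : 0 < W a := hWpos a ha
  have hWx : 0 < W x := hWpos x hx0
  have hWcont : ContinuousOn W (Set.Ioi 0) :=
    fun y hy => (hW' y hy).continuousAt.continuousWithinAt
  -- integrability of W on [0,y]
  have hWint : ∀ y : ℝ, 0 < y → IntervalIntegrable W volume 0 y := by
    intro y hy
    rw [intervalIntegrable_iff_integrableOn_Ioc_of_le hy.le]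
    refine ⟨(hWcont.mono Ioc_subset_Ioi_self).aestronglyMeasurable measurableSet_Ioc, ?_⟩
    refine HasFiniteIntegral.restrict_of_bounded (C := W y) measure_Ioc_lt_top ?_
    refine (ae_restrict_iff' measurableSet_Ioc).2 (ae_of_all _ fun s hs => ?_)
    rw [Real.norm_eq_abs, abs_of_pos (hWpos s hs.1)]
    rcases eq_or_lt_of_le hs.2 with h | h
    · exact le_of_eq (by rw [h])
    · exact (hmono hs.1 (lt_trans hs.1 h) h).le
  have hZpos : ∀ y : ℝ, 0 < y → 0 < Zfun q W y := by
    intro y hy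
    have hnn : 0 ≤ ∫ z in (0:ℝ)..y, W z := by
      rw [intervalIntegral.integral_of_le hy.le]
      exact setIntegral_nonneg measurableSet_Ioc fun s hs => (hWpos s hs.1).le
    unfold Zfun; positivity
  have hZcont : ContinuousOn (Zfun q W) (Set.Ioi 0) := by
    intro y hy
    have hI : HasDerivAt (fun t => ∫ z in (0:ℝ)..t, W z) (W y) y :=
      intervalIntegral.integral_hasDerivAt_right (hWint y hy)
        (ContinuousOn.stronglyMeasurableAtFilter isOpen_Ioi hWcont y hy)
        (hW' y hy).continuousAt
    exact ((continuousAt_const.add (continuousAt_const.mul hI.continuousAt))).continuousWithinAt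
  -- the reduced integrand
  set h : ℝ → ℝ := fun s =>
    (f s / Zfun q W s) / W s ^ c * (W' s * Zfun q W s / W s - q * W s) with hhdef
  have hsub : Set.Ioc (0:ℝ) a ⊆ Set.Ioi 0 := Ioc_subset_Ioi_self
  have hhcont : ContinuousOn h (Set.Ioc 0 a) := by
    have hWc : ContinuousOn (fun s => W s ^ c) (Set.Ioc 0 a) :=
      (hWcont.mono hsub).rpow_const fun s hs => Or.inr hc0.le
    refine ContinuousOn.mul ?_ ?_
    · exact ((hfc.div (hZcont.mono hsub) fun s hs => (hZpos s hs.1).ne').div hWc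
        fun s hs => (Real.rpow_pos_of_pos (hWpos s hs.1) c).ne')
    · exact (((hW'c.mono hsub).mul (hZcont.mono hsub)).div (hWcont.mono hsub)
        fun s hs => (hWpos s hs.1).ne').sub (continuousOn_const.mul (hWcont.mono hsub))
  set F : ℝ → ℝ := fun y => (W a ^ c)⁻¹ + c * ∫ s in y..a, h s with hFdef
  -- rewrite the integral equation
  have hfeq : ∀ y ∈ Set.Ioc (0:ℝ) a, f y = W y ^ c * F y := by
    intro y hy
    have hWy : 0 < W y := hWpos y hy.1
    have hEqOn : Set.EqOn
        (fun s => (f s / Zfun q W s) * (W y / W s) ^ c *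
          (W' s * Zfun q W s / W s - q * W s))
        (fun s => W y ^ c * h s) (Set.uIcc y a) := by
      intro s hs
      rw [Set.uIcc_of_le hy.2] at hs
      have hWs : 0 < W s := hWpos s (lt_of_lt_of_le hy.1 hs.1)
      simp only [hhdef]
      rw [Real.div_rpow hWy.le hWs.le]
      field_simp
    rw [heq y hy, intervalIntegral.integral_congr hEqOn,
      intervalIntegral.integral_const_mul, Real.div_rpow hWy.le hWa.le]
    simp only [hFdef]
    ring
  -- derivative of F
  have hIcc_sub : Set.Icc x a ⊆ Set.Ioc 0 a :=
    fun s hs => ⟨lt_of_lt_of_le hx0 hs.1, hs.2⟩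
  have hhint : IntervalIntegrable h volume a x :=
    ContinuousOn.intervalIntegrable
      (by rw [Set.uIcc_of_ge hxa.le]; exact hhcont.mono hIcc_sub)
  have hhmeas : StronglyMeasurableAtFilter h (𝓝 x) :=
    ContinuousOn.stronglyMeasurableAtFilter isOpen_Ioo
      (hhcont.mono Set.Ioo_subset_Ioc_self) x ⟨hx0, hxa⟩
  have hhcontAt : ContinuousAt h x :=
    (hhcont.mono Set.Ioo_subset_Ioc_self).continuousAt (Ioo_mem_nhds hx0 hxa)
  have hG : HasDerivAt (fun y => ∫ s in a..y, h s) (h x) x :=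
    intervalIntegral.integral_hasDerivAt_right hhint hhmeas hhcontAt
  have hFeq : F = fun y => (W a ^ c)⁻¹ - c * ∫ s in a..y, h s := by
    funext y
    simp only [hFdef]
    rw [intervalIntegral.integral_symm]
    ring
  have hFderiv : HasDerivAt F (-(c * h x)) x := by
    rw [hFeq]
    exact ((hasDerivAt_const x ((W a ^ c)⁻¹)).sub ((hG.const_mul c))).congr_deriv (by ring)
  have hWc : HasDerivAt (fun y => W y ^ c) (W' x * c * W x ^ (c - 1)) x :=
    (hW' x hx0).rpow_const (Or.inl hWx.ne')
  have hprod := hWc.mul hFderiv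
  have heqn : f =ᶠ[𝓝 x] fun y => W y ^ c * F y :=
    Filter.eventuallyEq_of_mem (Ioo_mem_nhds hx0 hxa)
      (fun y hy => hfeq y ⟨hy.1, hy.2.le⟩)
  have hD := hprod.congr_of_eventuallyEq heqn
  refine hD.congr_deriv ?_
  -- algebra
  have hWcx : (0:ℝ) < W x ^ c := Real.rpow_pos_of_pos hWx c
  have hZx : 0 < Zfun q W x := hZpos x hx0
  have hFx : F x = f x / W x ^ c := by
    rw [hfeq x ⟨hx0, hxa.le⟩]; field_simp
  have hcm1 : W x ^ (c - 1) = W x ^ c / W x := by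
    rw [Real.rpow_sub hWx, Real.rpow_one]
  rw [hFx, hcm1]
  simp only [hhdef]
  field_simp
  ring
end

section
/- lim_{b→∞} ∫_b^∞ ( W(b)/W(z) )^{1/(1−ℓ)} dz = (1−ℓ)/Φ. -/
open MeasureTheory Set Filter

lemma exp_shift_integrableOn (b c : ℝ) (hc : 0 < c) :
    IntegrableOn (fun z => Real.exp (-(c * (z - b)))) (Set.Ioi b) := by
  have h := exp_neg_integrableOn_Ioi b hc
  have heq : (fun z => Real.exp (-(c * (z - b))))
      = fun z => Real.exp (c * b) * Real.exp (-c * z) := by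
    funext z; rw [← Real.exp_add]; ring_nf
  rw [heq]
  exact h.const_mul _

lemma exp_shift_integral (b c : ℝ) (hc : 0 < c) :
    ∫ z in Set.Ioi b, Real.exp (-(c * (z - b))) = 1 / c := by
  have hderiv : ∀ x ∈ Set.Ioi b,
      HasDerivAt (fun z => -Real.exp (-(c * (z - b))) / c)
        (Real.exp (-(c * (x - b)))) x := by
    intro x _
    have h1 : HasDerivAt (fun z : ℝ => -(c * (z - b))) (-c) x := by
      have := ((hasDerivAt_id x).sub_const b).const_mul (-c)
      simpa [neg_mul] using this
    have h3 := (h1.exp.neg).div_const c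
    refine h3.congr_deriv ?_
    rw [div_eq_iff (ne_of_gt hc)]; ring
  have htop : Tendsto (fun z : ℝ => -Real.exp (-(c * (z - b))) / c) atTop (nhds 0) := by
    have h1 : Tendsto (fun z : ℝ => c * (z - b)) atTop atTop := by
      apply Tendsto.const_mul_atTop hc
      simpa [sub_eq_add_neg] using tendsto_atTop_add_const_right atTop (-b) tendsto_id
    have h2 : Tendsto (fun z : ℝ => -(c * (z - b))) atTop atBot :=
      tendsto_neg_atTop_atBot.comp h1
    have h3 : Tendsto (fun z : ℝ => Real.exp (-(c * (z - b)))) atTop (nhds 0) :=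
      Real.tendsto_exp_atBot.comp h2
    have := (h3.neg).div_const c
    simpa using this
  have hcont : ContinuousWithinAt (fun z => -Real.exp (-(c * (z - b))) / c)
      (Set.Ici b) b := by
    apply Continuous.continuousWithinAt
    fun_prop
  have := integral_Ioi_of_hasDerivAt_of_tendsto hcont hderiv
    (exp_shift_integrableOn b c hc) htop
  rw [this]
  simp [div_eq_mul_inv]

lemma int_bounds (ℓ Φ : ℝ) (hℓ : ℓ ∈ Set.Ioo (0:ℝ) 1) (hΦ : 0 < Φ)
    (W W' : ℝ → ℝ) (hWpos : ∀ x > (0:ℝ), 0 < W x)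
    (hW' : ∀ x > (0:ℝ), HasDerivAt W (W' x) x)
    (hratio : Tendsto (fun x => W' x / W x) atTop (nhds Φ))
    (ε : ℝ) (hε : 0 < ε) (hεΦ : ε < Φ) :
    ∀ᶠ b in atTop,
      (1 - ℓ) / (Φ + ε) ≤ (∫ z in Set.Ioi b, (W b / W z) ^ ((1:ℝ) / (1 - ℓ))) ∧
      (∫ z in Set.Ioi b, (W b / W z) ^ ((1:ℝ) / (1 - ℓ))) ≤ (1 - ℓ) / (Φ - ε) := by
  obtain ⟨B0, hB0⟩ := (Metric.tendsto_atTop.1 hratio) ε hε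
  set B := max B0 1 with hB
  have hB1 : (1:ℝ) ≤ B := le_max_right _ _
  have hBpos : (0:ℝ) < B := lt_of_lt_of_le one_pos hB1
  have hclose : ∀ x, B ≤ x → Φ - ε < W' x / W x ∧ W' x / W x < Φ + ε := by
    intro x hx
    have := hB0 x (le_trans (le_max_left _ _) hx)
    rw [Real.dist_eq, abs_lt] at this
    constructor <;> linarith [this.1, this.2]
  have hxpos : ∀ x : ℝ, B ≤ x → 0 < x := fun x hx => lt_of_lt_of_le hBpos hx
  set p : ℝ := (1:ℝ) / (1 - ℓ) with hpdef
  have h1ℓ : 0 < 1 - ℓ := by linarith [hℓ.2]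
  have hp : 0 < p := by positivity
  set g : ℝ → ℝ := fun x => Real.log (W x) with hg
  have hgderiv : ∀ x, B ≤ x → HasDerivAt g (W' x / W x) x := by
    intro x hx
    exact (hW' x (hxpos x hx)).log (ne_of_gt (hWpos x (hxpos x hx)))
  have hd : ∀ c : ℝ, ∀ x, B ≤ x → HasDerivAt (fun y => g y - c * y) (W' x / W x - c) x := by
    intro c x hx
    have := (hgderiv x hx).sub ((hasDerivAt_id x).const_mul c)
    exact this.congr_deriv (by ring)
  -- monotonicity of g x - (Φ - ε) x on Ici B
  have m1 : MonotoneOn (fun x => g x - (Φ - ε) * x) (Set.Ici B) := by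
    apply monotoneOn_of_deriv_nonneg (convex_Ici B)
    · exact fun x hx => ((hd (Φ - ε) x hx).continuousAt).continuousWithinAt
    · intro x hx
      rw [interior_Ici] at hx
      exact ((hd (Φ - ε) x (le_of_lt hx)).differentiableAt).differentiableWithinAt
    · intro x hx
      rw [interior_Ici] at hx
      rw [(hd (Φ - ε) x (le_of_lt hx)).deriv]
      have := (hclose x (le_of_lt hx)).1
      linarith
  have m2 : AntitoneOn (fun x => g x - (Φ + ε) * x) (Set.Ici B) := by
    apply antitoneOn_of_deriv_nonpos (convex_Ici B)
    · exact fun x hx => ((hd (Φ + ε) x hx).continuousAt).continuousWithinAt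
    · intro x hx
      rw [interior_Ici] at hx
      exact ((hd (Φ + ε) x (le_of_lt hx)).differentiableAt).differentiableWithinAt
    · intro x hx
      rw [interior_Ici] at hx
      rw [(hd (Φ + ε) x (le_of_lt hx)).deriv]
      have := (hclose x (le_of_lt hx)).2
      linarith
  filter_upwards [eventually_ge_atTop B] with b hb
  have hbpos : 0 < b := hxpos b hb
  have hWb : 0 < W b := hWpos b hbpos
  -- pointwise bounds on Ioi b
  have hpt : ∀ z ∈ Set.Ioi b,
      Real.exp (-(p * (Φ + ε) * (z - b))) ≤ (W b / W z) ^ p ∧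
      (W b / W z) ^ p ≤ Real.exp (-(p * (Φ - ε) * (z - b))) := by
    intro z hz
    have hzb : b ≤ z := le_of_lt hz
    have hzB : B ≤ z := le_trans hb hzb
    have hWz : 0 < W z := hWpos z (hxpos z hzB)
    have hrpow : (W b / W z) ^ p = Real.exp (p * (g b - g z)) := by
      rw [Real.rpow_def_of_pos (div_pos hWb hWz), Real.log_div (ne_of_gt hWb) (ne_of_gt hWz)]
      simp only [hg]
      ring_nf
    have h1 : g b - (Φ - ε) * b ≤ g z - (Φ - ε) * z := m1 hb (le_trans hb hzb) hzb
    have h2 : g z - (Φ + ε) * z ≤ g b - (Φ + ε) * b := m2 hb (le_trans hb hzb) hzb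
    constructor
    · rw [hrpow]
      apply Real.exp_le_exp.2
      have : -((Φ + ε) * (z - b)) ≤ g b - g z := by linarith
      calc -(p * (Φ + ε) * (z - b)) = p * (-((Φ + ε) * (z - b))) := by ring
        _ ≤ p * (g b - g z) := by
            exact mul_le_mul_of_nonneg_left this (le_of_lt hp)
    · rw [hrpow]
      apply Real.exp_le_exp.2
      have : g b - g z ≤ -((Φ - ε) * (z - b)) := by linarith
      calc p * (g b - g z) ≤ p * (-((Φ - ε) * (z - b))) :=
            mul_le_mul_of_nonneg_left this (le_of_lt hp)
        _ = -(p * (Φ - ε) * (z - b)) := by ring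
  have hcu : 0 < p * (Φ - ε) := mul_pos hp (by linarith)
  have hcl : 0 < p * (Φ + ε) := by positivity
  have hintu := exp_shift_integrableOn b (p * (Φ - ε)) hcu
  have hintl := exp_shift_integrableOn b (p * (Φ + ε)) hcl
  -- measurability of integrand
  have hcI : ContinuousOn (fun z => (W b / W z) ^ p) (Set.Ioi b) := by
    apply ContinuousOn.rpow_const
    · apply ContinuousOn.div continuousOn_const
      · intro z hz
        exact ((hW' z (hxpos z (le_trans hb (le_of_lt hz)))).continuousAt).continuousWithinAt
      · intro z hz
        exact ne_of_gt (hWpos z (hxpos z (le_trans hb (le_of_lt hz))))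
    · intro z _
      exact Or.inr (le_of_lt hp)
  have hintI : IntegrableOn (fun z => (W b / W z) ^ p) (Set.Ioi b) := by
    apply hintu.mono' (hcI.aestronglyMeasurable measurableSet_Ioi)
    rw [ae_restrict_iff' measurableSet_Ioi]
    apply ae_of_all
    intro z hz
    rw [Real.norm_eq_abs, abs_of_nonneg (Real.rpow_nonneg (le_of_lt (div_pos hWb
      (hWpos z (hxpos z (le_trans hb (le_of_lt hz)))))) p)]
    exact (hpt z hz).2
  constructor
  · have hle := setIntegral_mono_on hintl hintI measurableSet_Ioi (fun z hz => (hpt z hz).1)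
    rw [exp_shift_integral b (p * (Φ + ε)) hcl] at hle
    have heq : 1 / (p * (Φ + ε)) = (1 - ℓ) / (Φ + ε) := by
      rw [hpdef]
      field_simp
    rw [heq] at hle
    exact hle
  · have hle := setIntegral_mono_on hintI hintu measurableSet_Ioi (fun z hz => (hpt z hz).2)
    rw [exp_shift_integral b (p * (Φ - ε)) hcu] at hle
    have heq : 1 / (p * (Φ - ε)) = (1 - ℓ) / (Φ - ε) := by
      rw [hpdef]
      field_simp
    rw [heq] at hle
    exact hle

theorem stmt6 (ℓ Φ : ℝ) (hℓ : ℓ ∈ Set.Ioo (0:ℝ) 1) (hΦ : 0 < Φ)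
    (W W' : ℝ → ℝ) (hWpos : ∀ x > (0:ℝ), 0 < W x)
    (hW' : ∀ x > (0:ℝ), HasDerivAt W (W' x) x)
    (hW'c : ContinuousOn W' (Set.Ioi 0))
    (hmono : StrictMonoOn W (Set.Ioi 0))
    (hratio : Tendsto (fun x => W' x / W x) atTop (nhds Φ)) :
    Tendsto (fun b => ∫ z in Set.Ioi b, (W b / W z) ^ ((1:ℝ) / (1 - ℓ)))
      atTop (nhds ((1 - ℓ) / Φ)) := by
  have h1ℓ : 0 < 1 - ℓ := by linarith [hℓ.2]
  rw [tendsto_order]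
  constructor
  · intro c hc
    rcases le_or_gt c 0 with hc0 | hc0
    · have hb := int_bounds ℓ Φ hℓ hΦ W W' hWpos hW' hratio (Φ/2) (by positivity) (by linarith)
      filter_upwards [hb] with b hb
      have : (0:ℝ) < (1 - ℓ) / (Φ + Φ/2) := by positivity
      linarith [hb.1]
    · have hΦc : Φ < (1 - ℓ) / c := by
        rw [lt_div_iff₀ hc0]
        rw [lt_div_iff₀ hΦ] at hc
        linarith
      set ε := min (Φ/2) (((1 - ℓ)/c - Φ)/2) with hεdef
      have hε : 0 < ε := lt_min (by positivity) (by linarith)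
      have hεΦ : ε < Φ := lt_of_le_of_lt (min_le_left _ _) (by linarith)
      have hkey : c < (1 - ℓ) / (Φ + ε) := by
        have h1 : Φ + ε < (1 - ℓ)/c := by
          have := min_le_right (Φ/2) (((1 - ℓ)/c - Φ)/2)
          have : ε ≤ ((1 - ℓ)/c - Φ)/2 := this
          linarith
        rw [lt_div_iff₀ (by positivity : (0:ℝ) < Φ + ε)]
        have h2 := (lt_div_iff₀ hc0).1 h1
        nlinarith
      have hb := int_bounds ℓ Φ hℓ hΦ W W' hWpos hW' hratio ε hε hεΦ
      filter_upwards [hb] with b hb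
      calc c < (1 - ℓ) / (Φ + ε) := hkey
        _ ≤ _ := hb.1
  · intro c hc
    have hcpos : 0 < c := lt_trans (by positivity) hc
    have hΦc : (1 - ℓ) / c < Φ := by
      rw [div_lt_iff₀ hcpos]
      have hc' : (1 - ℓ) / Φ < c := hc
      rw [div_lt_iff₀ hΦ] at hc'
      linarith
    have hlc : 0 < (1 - ℓ)/c := by positivity
    set ε := min (Φ/2) ((Φ - (1 - ℓ)/c)/2) with hεdef
    have hε : 0 < ε := lt_min (by positivity) (by linarith)
    have hεΦ : ε < Φ := lt_of_le_of_lt (min_le_left _ _) (by linarith)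
    have hkey : (1 - ℓ) / (Φ - ε) < c := by
      have h1 : (1 - ℓ)/c < Φ - ε := by
        have : ε ≤ (Φ - (1 - ℓ)/c)/2 := min_le_right _ _
        linarith
      rw [div_lt_iff₀ (by linarith : (0:ℝ) < Φ - ε)]
      rw [div_lt_iff₀ hcpos] at h1
      nlinarith
    have hb := int_bounds ℓ Φ hℓ hΦ W W' hWpos hW' hratio ε hε hεΦ
    filter_upwards [hb] with b hb
    calc (∫ z in Set.Ioi b, (W b / W z) ^ ((1:ℝ) / (1 - ℓ))) ≤ (1 - ℓ)/(Φ - ε) := hb.2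
      _ < c := hkey
end

section
/- lim_{b→∞} ∫_b^∞ ( W(b)/W(z) )^{1/(1−ℓ)} · ( W'(z)·Z(z)/W(z) − q·W(z) ) dz = 0. -/
open MeasureTheory Set Filter

theorem stmt7 (q ℓ Φ : ℝ) (hq : 0 < q) (hℓ : ℓ ∈ Set.Ioo (0:ℝ) 1) (hΦ : 0 < Φ)
    (W W' : ℝ → ℝ) (hWpos : ∀ x > (0:ℝ), 0 < W x)
    (hW' : ∀ x > (0:ℝ), HasDerivAt W (W' x) x)
    (hW'c : ContinuousOn W' (Set.Ioi 0))
    (hmono : StrictMonoOn W (Set.Ioi 0))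
    (hratio : Tendsto (fun x => W' x / W x) atTop (nhds Φ))
    (hZlim : Tendsto (fun a => Zfun q W a - q * (W a) ^ 2 / W' a) atTop (nhds 0)) :
    Tendsto
      (fun b => ∫ z in Set.Ioi b,
        (W b / W z) ^ ((1:ℝ) / (1 - ℓ)) * (W' z * Zfun q W z / W z - q * W z))
      atTop (nhds 0) := by
  obtain ⟨hℓ0, hℓ1⟩ := hℓ
  have h1ℓ : 0 < 1 - ℓ := by linarith
  set p : ℝ := (1:ℝ) / (1 - ℓ) with hpdef
  have hp1 : 1 < p := by
    rw [hpdef, lt_div_iff₀ h1ℓ]; nlinarith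
  have hp0 : (0:ℝ) < p := by linarith
  have hWc : ContinuousOn W (Ioi 0) := fun x hx => (hW' x hx).continuousAt.continuousWithinAt
  -- continuity of Zfun on Ici 1
  have hZc : ContinuousOn (Zfun q W) (Ici 1) := by
    by_cases hInt : IntervalIntegrable W volume 0 1
    · have hprim : ∀ z : ℝ, 1 ≤ z → HasDerivAt (fun u => ∫ t in (0:ℝ)..u, W t) (W z) z := by
        intro z hz
        have hz0 : (0:ℝ) < z := lt_of_lt_of_le one_pos hz
        have hIz : IntervalIntegrable W volume 0 z := by
          refine hInt.trans ?_
          apply ContinuousOn.intervalIntegrable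
          intro x hx
          have hx0 : 0 < x := by
            rcases hx with ⟨h1, h2⟩
            rcases le_total (1:ℝ) z with h | h
            · simp [min_eq_left h] at h1 ⊢; linarith
            · simp [min_eq_right h] at h1 ⊢; linarith
          exact (hW' x hx0).continuousAt.continuousWithinAt
        refine intervalIntegral.integral_hasDerivAt_right hIz ?_ (hW' z hz0).continuousAt
        exact ⟨Ioi 0, Ioi_mem_nhds hz0, hWc.aestronglyMeasurable measurableSet_Ioi⟩
      have : ContinuousOn (fun z => ∫ t in (0:ℝ)..z, W t) (Ici 1) :=
        fun z hz => (hprim z hz).continuousAt.continuousWithinAt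
      exact continuousOn_const.add (continuousOn_const.mul this)
    · have heq : Set.EqOn (Zfun q W) (fun _ => (1:ℝ)) (Ici 1) := by
        intro z hz
        have hnz : ¬ IntervalIntegrable W volume 0 z := by
          intro h
          refine hInt (h.mono_set ?_)
          refine Set.uIcc_subset_uIcc left_mem_uIcc ?_
          rw [Set.uIcc_of_le (le_trans zero_le_one hz)]
          exact ⟨zero_le_one, hz⟩
        simp [Zfun, intervalIntegral.integral_undef hnz]
      exact continuousOn_const.congr heq
  rw [Metric.tendsto_atTop]
  intro ε hε
  have hε2 : 0 < ε/2 := by linarith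
  have hev : ∀ᶠ x in atTop,
      (Φ/2 < W' x / W x ∧ |Zfun q W x - q * W x ^ 2 / W' x| < ε/2) ∧ 1 ≤ x := by
    refine ((hratio.eventually (eventually_gt_nhds (by linarith : Φ/2 < Φ))).and ?_).and
      (eventually_ge_atTop 1)
    have := Metric.tendsto_nhds.mp hZlim (ε/2) hε2
    simpa [Real.dist_eq] using this
  obtain ⟨B, hB⟩ := eventually_atTop.mp hev
  refine ⟨B, fun b hb => ?_⟩
  have hb1 : 1 ≤ b := (hB b hb).2
  have hb0 : 0 < b := lt_of_lt_of_le one_pos hb1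
  have hkey : ∀ z, b ≤ z → 0 < W z ∧ 0 < W' z ∧ |Zfun q W z - q * W z ^ 2 / W' z| < ε/2 := by
    intro z hz
    have hzB := hB z (le_trans hb hz)
    have hz0 : 0 < z := lt_of_lt_of_le hb0 hz
    have hWz := hWpos z hz0
    refine ⟨hWz, ?_, hzB.1.2⟩
    have h1 := hzB.1.1
    have hΦ2 : (0:ℝ) < Φ/2 := by linarith
    have h2 : 0 < W' z / W z := lt_trans hΦ2 h1
    have h3 := mul_pos h2 hWz
    rwa [div_mul_cancel₀ _ hWz.ne'] at h3
  have hWb : 0 < W b := (hkey b le_rfl).1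
  -- antiderivative
  set F : ℝ → ℝ := fun z => -(W z) ^ (-p) / p with hFdef
  have hFderiv : ∀ z, 0 < z → HasDerivAt F (W' z * (W z) ^ (-p - 1)) z := by
    intro z hz
    have h := (((hW' z hz).rpow_const (p := -p) (Or.inl (hWpos z hz).ne')).neg).div_const p
    refine h.congr_deriv ?_
    rw [div_eq_iff hp0.ne']
    ring
  have hFlim : ∃ L, L ≤ 0 ∧ Tendsto F atTop (nhds L) := by
    set T : ℝ → ℝ := fun x => -(W (max x b)) ^ (-p) / p with hTdef
    have hTpos : ∀ x, 0 < W (max x b) := fun x => hWpos _ (lt_of_lt_of_le hb0 (le_max_right x b))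
    have hTnonpos : ∀ x, T x ≤ 0 := by
      intro x
      have := Real.rpow_pos_of_pos (hTpos x) (-p)
      exact div_nonpos_of_nonpos_of_nonneg (by linarith) hp0.le
    have hTmono : Monotone T := by
      intro x y hxy
      have h1 : W (max x b) ≤ W (max y b) := by
        rcases eq_or_lt_of_le (max_le_max hxy (le_refl b)) with h | h
        · rw [h]
        · exact le_of_lt (hmono (lt_of_lt_of_le hb0 (le_max_right x b))
            (lt_of_lt_of_le hb0 (le_max_right y b)) h)
      have h2 : (W (max y b)) ^ (-p) ≤ (W (max x b)) ^ (-p) := by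
        rw [Real.rpow_neg (hTpos x).le, Real.rpow_neg (hTpos y).le]
        exact inv_anti₀ (Real.rpow_pos_of_pos (hTpos x) p)
          (Real.rpow_le_rpow (hTpos x).le h1 hp0.le)
      have := neg_le_neg h2
      exact div_le_div_of_nonneg_right this hp0.le
    have hTbdd : BddAbove (Set.range T) := by
      refine ⟨0, ?_⟩
      rintro _ ⟨x, rfl⟩
      exact hTnonpos x
    refine ⟨⨆ x : ℝ, T x, ciSup_le hTnonpos, ?_⟩
    refine (tendsto_atTop_ciSup hTmono hTbdd).congr' ?_
    filter_upwards [eventually_ge_atTop b] with x hx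
    simp only [hTdef, hFdef, max_eq_left hx]
  obtain ⟨L, hL0, hFlim⟩ := hFlim
  set g : ℝ → ℝ := fun z => W' z * (W z) ^ (-p - 1) with hgdef
  have hg_nonneg : ∀ z ∈ Ioi b, 0 ≤ g z := fun z hz =>
    le_of_lt (mul_pos (hkey z (le_of_lt hz)).2.1 (Real.rpow_pos_of_pos (hkey z (le_of_lt hz)).1 _))
  have hgderiv : ∀ z ∈ Ioi b, HasDerivAt F (g z) z := fun z hz => hFderiv z (lt_trans hb0 hz)
  have hFcont : ContinuousWithinAt F (Ici b) b := (hFderiv b hb0).continuousAt.continuousWithinAt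
  have hg_int : IntegrableOn g (Ioi b) :=
    integrableOn_Ioi_deriv_of_nonneg hFcont hgderiv hg_nonneg hFlim
  have hg_val : ∫ z in Ioi b, g z = L - F b :=
    integral_Ioi_of_hasDerivAt_of_nonneg hFcont hgderiv hg_nonneg hFlim
  set f : ℝ → ℝ := fun z => (W b / W z) ^ p * (W' z * Zfun q W z / W z - q * W z) with hfdef
  have hfid : ∀ z ∈ Ioi b, f z = ((W b)^p * g z) * (Zfun q W z - q * W z ^ 2 / W' z) := by
    intro z hz
    obtain ⟨hWz, hW'z, _⟩ := hkey z (le_of_lt hz)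
    have e1 : (W z) ^ (-p - 1) = ((W z)^p * W z)⁻¹ := by
      rw [show -p - 1 = -(p+1) by ring, Real.rpow_neg hWz.le, Real.rpow_add hWz, Real.rpow_one]
    simp only [hfdef, hgdef, e1, Real.div_rpow hWb.le hWz.le]
    have hWzp : (W z)^p ≠ 0 := (Real.rpow_pos_of_pos hWz p).ne'
    field_simp
  have hf_bound : ∀ z ∈ Ioi b, ‖f z‖ ≤ ((W b)^p * (ε/2)) * g z := by
    intro z hz
    obtain ⟨hWz, hW'z, hG⟩ := hkey z (le_of_lt hz)
    rw [hfid z hz, Real.norm_eq_abs, abs_mul]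
    have hnn : 0 ≤ (W b)^p * g z :=
      mul_nonneg (Real.rpow_pos_of_pos hWb p).le (hg_nonneg z hz)
    rw [abs_of_nonneg hnn]
    refine le_trans (mul_le_mul_of_nonneg_left hG.le hnn) (le_of_eq (by ring))
  have hcf : ContinuousOn f (Ioi b) := by
    have hsub : Ioi b ⊆ Ioi 0 := fun z hz => lt_trans hb0 hz
    have hsub1 : Ioi b ⊆ Ici 1 := fun z hz => le_of_lt (lt_of_le_of_lt hb1 hz)
    have hWcb : ContinuousOn W (Ioi b) := hWc.mono hsub
    have hW'cb : ContinuousOn W' (Ioi b) := hW'c.mono hsub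
    have hZcb : ContinuousOn (Zfun q W) (Ioi b) := hZc.mono hsub1
    have hWne : ∀ z ∈ Ioi b, W z ≠ 0 := fun z hz => (hkey z (le_of_lt hz)).1.ne'
    refine ContinuousOn.mul ?_ ?_
    · refine ContinuousOn.rpow_const (continuousOn_const.div hWcb hWne) ?_
      intro z hz; exact Or.inr hp0.le
    · exact ((hW'cb.mul hZcb).div hWcb hWne).sub (continuousOn_const.mul hWcb)
  have hf_meas : AEStronglyMeasurable f (volume.restrict (Ioi b)) :=
    hcf.aestronglyMeasurable measurableSet_Ioi
  have hbound_int : IntegrableOn (fun z => ((W b)^p * (ε/2)) * g z) (Ioi b) :=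
    hg_int.const_mul _
  have hf_int : IntegrableOn f (Ioi b) := by
    refine Integrable.mono' hbound_int hf_meas ?_
    exact (ae_restrict_iff' measurableSet_Ioi).mpr (ae_of_all _ hf_bound)
  rw [Real.dist_eq, sub_zero]
  have h1 : |∫ z in Ioi b, f z| ≤ ∫ z in Ioi b, ‖f z‖ := by
    rw [← Real.norm_eq_abs]
    exact norm_integral_le_integral_norm f
  have h2 : ∫ z in Ioi b, ‖f z‖ ≤ ∫ z in Ioi b, ((W b)^p * (ε/2)) * g z := by
    refine integral_mono_ae hf_int.norm hbound_int ?_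
    exact (ae_restrict_iff' measurableSet_Ioi).mpr (ae_of_all _ hf_bound)
  have h3 : ∫ z in Ioi b, ((W b)^p * (ε/2)) * g z = ((W b)^p * (ε/2)) * (L - F b) := by
    rw [MeasureTheory.integral_const_mul, hg_val]
  have h4 : L - F b ≤ (W b)^(-p)/p := by
    have hF : F b = -(W b)^(-p)/p := rfl
    rw [hF, neg_div]
    linarith
  have h5 : ((W b)^p * (ε/2)) * (L - F b) ≤ ε/2 := by
    have hpos : 0 ≤ (W b)^p * (ε/2) :=
      mul_nonneg (Real.rpow_pos_of_pos hWb p).le hε2.le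
    have := mul_le_mul_of_nonneg_left h4 hpos
    refine le_trans this ?_
    have hone : (W b)^p * (W b)^(-p) = 1 := by
      rw [← Real.rpow_add hWb]; simp
    have : (W b)^p * (ε/2) * ((W b)^(-p)/p) = (ε/2)/p := by
      field_simp
      nlinarith [hone]
    rw [this]
    exact div_le_self hε2.le hp1.le
  calc |∫ z in Ioi b, f z| ≤ ∫ z in Ioi b, ‖f z‖ := h1
    _ ≤ ∫ z in Ioi b, ((W b)^p * (ε/2)) * g z := h2
    _ = ((W b)^p * (ε/2)) * (L - F b) := h3
    _ ≤ ε/2 := h5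
    _ < ε := by linarith
end

section
/- The function f is differentiable on (0,∞) with f'(b) = (1 − S·q·W(b)) · ( W'(b)·W'''(b) − (W''(b))² ) / (W'(b))² for all b > 0; in particular, f'(b) > 0 at every b > 0 with 1 − S·q·W(b) > 0. -/
open Set Filter

/-- `f(b) = ((1 − S·q·W(b))/W'(b))·W''(b) + S·q·W'(b)`. -/
noncomputable def ffun (q S : ℝ) (W W' W'' : ℝ → ℝ) (b : ℝ) : ℝ :=
  ((1 - S * q * W b) / W' b) * W'' b + S * q * W' b

theorem stmt11 (q S : ℝ) (hq : 0 < q)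
    (W W' W'' W''' : ℝ → ℝ)
    (hW1 : ∀ x > (0:ℝ), HasDerivAt W (W' x) x)
    (hW2 : ∀ x > (0:ℝ), HasDerivAt W' (W'' x) x)
    (hW3 : ∀ x > (0:ℝ), HasDerivAt W'' (W''' x) x)
    (hW3c : ContinuousOn W''' (Set.Ioi 0))
    (hWpos : ∀ x > (0:ℝ), 0 < W x) (hW'pos : ∀ x > (0:ℝ), 0 < W' x)
    (hcm : ∀ x > (0:ℝ), (W'' x) ^ 2 < W' x * W''' x) :
    (∀ b > (0:ℝ),
      HasDerivAt (ffun q S W W' W'')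
        ((1 - S * q * W b) * (W' b * W''' b - (W'' b) ^ 2) / (W' b) ^ 2) b)
    ∧ (∀ b > (0:ℝ), 0 < 1 - S * q * W b →
        0 < (1 - S * q * W b) * (W' b * W''' b - (W'' b) ^ 2) / (W' b) ^ 2) := by
  constructor
  · intro b hb
    have hW'ne : W' b ≠ 0 := ne_of_gt (hW'pos b hb)
    have h1 : HasDerivAt (fun x => 1 - S * q * W x) (-(S * q * W' b)) b := by
      simpa using ((hW1 b hb).const_mul (S * q)).const_sub 1
    have h2 : HasDerivAt (fun x => (1 - S * q * W x) / W' x)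
        ((-(S * q * W' b) * W' b - (1 - S * q * W b) * W'' b) / (W' b)^2) b :=
      h1.div (hW2 b hb) hW'ne
    have h3 : HasDerivAt (fun x => ((1 - S * q * W x) / W' x) * W'' x)
        (((-(S * q * W' b) * W' b - (1 - S * q * W b) * W'' b) / (W' b)^2) * W'' b
          + ((1 - S * q * W b) / W' b) * W''' b) b :=
      h2.mul (hW3 b hb)
    have h4 : HasDerivAt (ffun q S W W' W'')
        ((((-(S * q * W' b) * W' b - (1 - S * q * W b) * W'' b) / (W' b)^2) * W'' b
          + ((1 - S * q * W b) / W' b) * W''' b) + S * q * W'' b) b :=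
      h3.add ((hW2 b hb).const_mul (S * q))
    convert h4 using 1
    field_simp
    ring
  · intro b hb hpos
    have h1 : 0 < W' b * W''' b - (W'' b)^2 := sub_pos.mpr (hcm b hb)
    have h2 : 0 < (W' b)^2 := pow_pos (hW'pos b hb) 2
    positivity
end

section
/- Let b₀ > 0 be a point at which W''(b₀) = − S·q·(W'(b₀))² / (1 − S·q·W(b₀)) (note 1 − S·q·W(b₀) > 0 since S ≤ 0). Then ( W(b₀)·W'''(b₀) / (W'(b₀))² ) · (1 − S·q·W(b₀)) − S²·q²·W(b₀)·W'(b₀) / (1 − S·q·W(b₀)) > 0. -/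
open Set Filter

theorem stmt12 (q S : ℝ) (hq : 0 < q) (hS : S ≤ 0)
    (W W' W'' W''' : ℝ → ℝ)
    (hW1 : ∀ x > (0:ℝ), HasDerivAt W (W' x) x)
    (hW2 : ∀ x > (0:ℝ), HasDerivAt W' (W'' x) x)
    (hW3 : ∀ x > (0:ℝ), HasDerivAt W'' (W''' x) x)
    (hW3c : ContinuousOn W''' (Set.Ioi 0))
    (hWpos : ∀ x > (0:ℝ), 0 < W x) (hW'pos : ∀ x > (0:ℝ), 0 < W' x)
    (hcm : ∀ x > (0:ℝ), (W'' x) ^ 2 < W' x * W''' x)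
    (b₀ : ℝ) (hb₀ : 0 < b₀)
    (hcrit : W'' b₀ = -(S * q * (W' b₀) ^ 2) / (1 - S * q * W b₀)) :
    0 < (W b₀ * W''' b₀ / (W' b₀) ^ 2) * (1 - S * q * W b₀)
        - S ^ 2 * q ^ 2 * W b₀ * W' b₀ / (1 - S * q * W b₀) := by
  have hW := hWpos b₀ hb₀
  have hW' := hW'pos b₀ hb₀
  have hA : 0 < 1 - S * q * W b₀ := by nlinarith [mul_nonneg (mul_nonneg (neg_nonneg.mpr hS) hq.le) hW.le]
  have hkey := hcm b₀ hb₀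
  rw [hcrit] at hkey
  have hkey' : S ^ 2 * q ^ 2 * (W' b₀) ^ 4
      < W' b₀ * W''' b₀ * (1 - S * q * W b₀) ^ 2 := by
    have h2 : (-(S * q * (W' b₀) ^ 2) / (1 - S * q * W b₀)) ^ 2
        = S ^ 2 * q ^ 2 * (W' b₀) ^ 4 / (1 - S * q * W b₀) ^ 2 := by
      rw [div_pow]; ring_nf
    rw [h2, div_lt_iff₀ (by positivity)] at hkey
    linarith
  have heq : (W b₀ * W''' b₀ / (W' b₀) ^ 2) * (1 - S * q * W b₀)
        - S ^ 2 * q ^ 2 * W b₀ * W' b₀ / (1 - S * q * W b₀)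
      = (W b₀ * W''' b₀ * (1 - S * q * W b₀) ^ 2
          - S ^ 2 * q ^ 2 * W b₀ * W' b₀ * (W' b₀) ^ 2)
        / ((W' b₀) ^ 2 * (1 - S * q * W b₀)) := by
    field_simp
  rw [heq]
  apply div_pos _ (by positivity)
  nlinarith [mul_pos hW hW']
end

section
/- The function f̄ is differentiable with f̄'(a) = (1 − φc·Z(a)) · ( W(a)·W''(a) − (W'(a))² ) / W(a)² for all a > 0, and f̄'(a) > 0 for all a > 0. -/
open MeasureTheory Set Filter

/-- `f̄(a) = ((1 − φc·Z(a))/Z'(a))·Z''(a) + φc·Z'(a)`, where `Z'(a) = q·W(a)` and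
`Z''(a) = q·W'(a)`. -/
noncomputable def fbar (q φc : ℝ) (W W' : ℝ → ℝ) (a : ℝ) : ℝ :=
  ((1 - φc * Zfun q W a) / (q * W a)) * (q * W' a) + φc * (q * W a)

theorem stmt13 (q φc : ℝ) (hq : 0 < q) (hφc : 1 < φc)
    (W W' W'' : ℝ → ℝ)
    (hW1 : ∀ x > (0:ℝ), HasDerivAt W (W' x) x)
    (hW2 : ∀ x > (0:ℝ), HasDerivAt W' (W'' x) x)
    (hW2c : ContinuousOn W'' (Set.Ioi 0))
    (hWpos : ∀ x > (0:ℝ), 0 < W x) (hW'pos : ∀ x > (0:ℝ), 0 < W' x)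
    (hconc : ∀ x > (0:ℝ), W x * W'' x < (W' x) ^ 2) :
    ∀ a > (0:ℝ),
      HasDerivAt (fbar q φc W W')
        ((1 - φc * Zfun q W a) * (W a * W'' a - (W' a) ^ 2) / (W a) ^ 2) a
      ∧ 0 < (1 - φc * Zfun q W a) * (W a * W'' a - (W' a) ^ 2) / (W a) ^ 2 := by
  -- continuity of W on (0,∞)
  have hWc : ContinuousOn W (Set.Ioi 0) := fun x hx =>
    (hW1 x hx).continuousAt.continuousWithinAt
  -- W is strictly monotone on (0,∞)
  have hmono : StrictMonoOn W (Set.Ioi 0) := by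
    apply strictMonoOn_of_deriv_pos (convex_Ioi 0) hWc
    intro x hx
    rw [interior_Ioi] at hx
    rw [(hW1 x hx).deriv]
    exact hW'pos x hx
  intro a ha
  have hWa := hWpos a ha
  have hqWa : q * W a ≠ 0 := by positivity
  -- interval integrability of W on [0, a]
  have hint : IntervalIntegrable W volume 0 a := by
    rw [intervalIntegrable_iff_integrableOn_Ioc_of_le ha.le]
    refine ⟨(hWc.mono (Ioc_subset_Ioi_self)).aestronglyMeasurable measurableSet_Ioc, ?_⟩
    apply HasFiniteIntegral.restrict_of_bounded (C := W a) measure_Ioc_lt_top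
    filter_upwards [ae_restrict_mem measurableSet_Ioc] with x hx
    rw [Real.norm_eq_abs, abs_of_pos (hWpos x hx.1)]
    rcases eq_or_lt_of_le hx.2 with h | h
    · exact le_of_eq (by rw [h])
    · exact (hmono hx.1 ha h).le
  -- derivative of Zfun
  have hZ : HasDerivAt (Zfun q W) (q * W a) a := by
    have h := intervalIntegral.integral_hasDerivAt_right hint
      (ContinuousOn.stronglyMeasurableAtFilter isOpen_Ioi hWc a ha)
      (hW1 a ha).continuousAt
    exact (h.const_mul q).const_add 1
  -- Z a > 1
  have hZa : 1 < Zfun q W a := by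
    have hpos : 0 < ∫ z in (0:ℝ)..a, W z :=
      intervalIntegral.intervalIntegral_pos_of_pos_on hint
        (fun x hx => hWpos x hx.1) ha
    have : 0 < q * ∫ z in (0:ℝ)..a, W z := by positivity
    simp only [Zfun]; linarith
  -- derivative of fbar
  set Z := Zfun q W a
  have h1 : HasDerivAt (fun x => 1 - φc * Zfun q W x) (-(φc * (q * W a))) a := by
    simpa using ((hZ.const_mul φc).const_sub 1)
  have h2 : HasDerivAt (fun x => q * W x) (q * W' a) a := (hW1 a ha).const_mul q
  have h3 : HasDerivAt (fun x => q * W' x) (q * W'' a) a := (hW2 a ha).const_mul q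
  have hdiv := (h1.div h2 hqWa)
  have hfb := (hdiv.mul h3).add (h2.const_mul φc)
  have hfb' : HasDerivAt (fbar q φc W W')
      ((1 - φc * Z) * (W a * W'' a - (W' a) ^ 2) / (W a) ^ 2) a := by
    have hf : fbar q φc W W' = fun x =>
        ((1 - φc * Zfun q W x) / (q * W x)) * (q * W' x) + φc * (q * W x) := rfl
    rw [hf]
    refine hfb.congr_deriv ?_
    have hq0 : q ≠ 0 := hq.ne'
    have hWa0 : W a ≠ 0 := hWa.ne'
    simp only [Pi.div_apply, Z]
    field_simp
    ring
  refine ⟨hfb', ?_⟩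
  have hneg1 : 1 - φc * Z < 0 := by nlinarith
  have hneg2 : W a * W'' a - (W' a) ^ 2 < 0 := sub_neg.mpr (hconc a ha)
  have : 0 < (1 - φc * Z) * (W a * W'' a - (W' a) ^ 2) := mul_pos_of_neg_of_neg hneg1 hneg2
  positivity
end
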